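/- Let m ≥ 2, let 0 < R₁ < R₂, and let C, C' ∈ EuclideanSpace ℝ m be such that the closed ball of radius R₁ centered at C is contained in the open ball of radius R₂ centered at C'. Then, with respect to the Lebesgue measure, ∫_{x ∈ ball(C',R₂) \ closedBall(C,R₁)} ‖x − C‖^{2(1−m)} dx ≤ ∫_{x ∈ ball(C,R₂) \ closedBall(C,R₁)} ‖x − C‖^{2(1−m)} dx, and equality holds if and only if C' = C. -/

import Mathlib

open MeasureTheory Metric Set

private lemma myzpow_anti {a b : ℝ} (ha : 0 < a) (hab : a ≤ b) {n : ℤ} (hn : n ≤ 0) :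
    b ^ n ≤ a ^ n := by
  obtain ⟨k, rfl⟩ := Int.exists_eq_neg_ofNat hn
  simp only [zpow_neg, zpow_natCast]
  gcongr

private lemma myzpow_anti_strict {a b : ℝ} (ha : 0 < a) (hab : a < b) {n : ℤ} (hn : n < 0) :
    b ^ n < a ^ n := by
  obtain ⟨k, rfl⟩ := Int.exists_eq_neg_ofNat hn.le
  have hk : k ≠ 0 := by rintro rfl; simp at hn
  simp only [zpow_neg, zpow_natCast]
  have h1 : (0:ℝ) < a ^ k := pow_pos ha k
  have h2 : a ^ k < b ^ k := pow_lt_pow_left₀ hab ha.le hk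
  gcongr

set_option maxHeartbeats 1000000 in
theorem stmt8 (m : ℕ) (hm : 2 ≤ m) (R₁ R₂ : ℝ) (hR₁ : 0 < R₁) (hR : R₁ < R₂)
    (C C' : EuclideanSpace ℝ (Fin m)) (hsub : closedBall C R₁ ⊆ ball C' R₂) :
    (∫ x in ball C' R₂ \ closedBall C R₁, ‖x - C‖ ^ (2 * (1 - (m : ℤ)))) ≤
        (∫ x in ball C R₂ \ closedBall C R₁, ‖x - C‖ ^ (2 * (1 - (m : ℤ)))) ∧
      ((∫ x in ball C' R₂ \ closedBall C R₁, ‖x - C‖ ^ (2 * (1 - (m : ℤ)))) =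
          (∫ x in ball C R₂ \ closedBall C R₁, ‖x - C‖ ^ (2 * (1 - (m : ℤ)))) ↔ C' = C) := by
  by_cases hCC : C' = C
  · subst hCC; exact ⟨le_rfl, iff_of_true rfl rfl⟩
  set α : ℤ := 2 * (1 - (m : ℤ)) with hα
  have hαneg : α < 0 := by
    have : (2:ℤ) ≤ (m:ℤ) := by exact_mod_cast hm
    omega
  set f : EuclideanSpace ℝ (Fin m) → ℝ := fun x => ‖x - C‖ ^ α with hf
  set B := ball C R₂ with hB
  set B' := ball C' R₂ with hB'
  set K := closedBall C R₁ with hK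
  have hR₂ : 0 < R₂ := hR₁.trans hR
  have hKB : K ⊆ B := closedBall_subset_ball hR
  have hmB : MeasurableSet B := measurableSet_ball
  have hmB' : MeasurableSet B' := measurableSet_ball
  have hmK : MeasurableSet K := measurableSet_closedBall
  -- distance facts
  have hdistK : ∀ x : EuclideanSpace ℝ (Fin m), x ∉ K → R₁ < ‖x - C‖ := by
    intro x hx
    have := fun h => hx (mem_closedBall.mpr h)
    rw [dist_eq_norm] at this
    exact lt_of_not_ge fun h => this h
  have hdistB : ∀ x : EuclideanSpace ℝ (Fin m), x ∉ B → R₂ ≤ ‖x - C‖ := by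
    intro x hx
    have := fun h => hx (mem_ball.mpr h)
    rw [dist_eq_norm] at this
    exact le_of_not_gt fun h => this h
  have hdistB2 : ∀ x : EuclideanSpace ℝ (Fin m), x ∈ B → ‖x - C‖ < R₂ := by
    intro x hx
    rw [hB, mem_ball, dist_eq_norm] at hx
    exact hx
  -- measurability of f
  have hfm : Measurable f := by
    obtain ⟨k, hk⟩ := Int.exists_eq_neg_ofNat hαneg.le
    have h1 : Measurable fun x : EuclideanSpace ℝ (Fin m) => ‖x - C‖ :=
      (measurable_id.sub measurable_const).norm
    have : f = fun x => (‖x - C‖ ^ k)⁻¹ := by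
      funext x; rw [hf]; simp only [hk, zpow_neg, zpow_natCast]
    rw [this]
    exact (h1.pow_const k).inv
  have hfnn : ∀ x, 0 ≤ f x := fun x => zpow_nonneg (norm_nonneg _) α
  -- integrability helper
  have hint : ∀ s : Set (EuclideanSpace ℝ (Fin m)), MeasurableSet s → volume s ≠ ⊤ →
      ∀ r : ℝ, 0 < r → (∀ x ∈ s, r ≤ ‖x - C‖) → IntegrableOn f s := by
    intro s hms hfin r hr hb
    refine Measure.integrableOn_of_bounded (M := r ^ α) hfin hfm.aestronglyMeasurable ?_
    filter_upwards [ae_restrict_mem hms] with x hx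
    rw [Real.norm_eq_abs, abs_of_nonneg (hfnn x)]
    exact myzpow_anti hr (hb x hx) hαneg.le
  have hfinB : volume B ≠ ⊤ := measure_ball_lt_top.ne
  have hfinB' : volume B' ≠ ⊤ := measure_ball_lt_top.ne
  have hIBB' : IntegrableOn f (B \ B') volume :=
    hint _ (hmB.diff hmB') ((lt_of_le_of_lt (measure_mono diff_subset) measure_ball_lt_top).ne)
      R₁ hR₁ (fun x hx => (hdistK x fun h => hx.2 (hsub h)).le)
  have hIB'B : IntegrableOn f (B' \ B) volume :=
    hint _ (hmB'.diff hmB) ((lt_of_le_of_lt (measure_mono diff_subset) measure_ball_lt_top).ne)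
      R₂ hR₂ (fun x hx => hdistB x hx.2)
  have hIint : IntegrableOn f ((B ∩ B') \ K) volume :=
    hint _ ((hmB.inter hmB').diff hmK)
      ((lt_of_le_of_lt (measure_mono (diff_subset.trans inter_subset_left))
        measure_ball_lt_top).ne) R₁ hR₁ (fun x hx => (hdistK x hx.2).le)
  -- set identities
  have hD' : B' \ K = ((B ∩ B') \ K) ∪ (B' \ B) := by
    ext x
    have h1 := @hKB x
    have h2 : x ∈ K → x ∈ B' := @hsub x
    simp only [mem_diff, mem_inter_iff, mem_union]
    tauto
  have hD : B \ K = ((B ∩ B') \ K) ∪ (B \ B') := by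
    ext x
    have h1 := @hKB x
    have h2 : x ∈ K → x ∈ B' := @hsub x
    simp only [mem_diff, mem_inter_iff, mem_union]
    tauto
  have hdisj1 : Disjoint ((B ∩ B') \ K) (B' \ B) := by
    rw [Set.disjoint_left]; rintro x ⟨⟨hxB, _⟩, _⟩ ⟨_, hxB2⟩; exact hxB2 hxB
  have hdisj2 : Disjoint ((B ∩ B') \ K) (B \ B') := by
    rw [Set.disjoint_left]; rintro x ⟨⟨_, hxB'⟩, _⟩ ⟨_, hxB2⟩; exact hxB2 hxB'
  -- measure equality
  have hμeq : volume (B' \ B) = volume (B \ B') := by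
    have h1 := measure_inter_add_diff (μ := volume) B' hmB
    have h2 := measure_inter_add_diff (μ := volume) B hmB'
    have h3 : volume B' = volume B := by
      rw [hB, hB', Measure.addHaar_ball_center volume C', Measure.addHaar_ball_center volume C]
    have h4 : B' ∩ B = B ∩ B' := inter_comm _ _
    rw [h4, h3] at h1
    have h5 : volume (B ∩ B') ≠ ⊤ :=
      (lt_of_le_of_lt (measure_mono inter_subset_left) measure_ball_lt_top).ne
    have h6 : volume (B ∩ B') + volume (B' \ B) = volume (B ∩ B') + volume (B \ B') := by
      rw [h1, h2]
    exact (ENNReal.add_right_inj h5).mp h6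
  -- positivity of the measure of B \ B'
  have hpos : 0 < volume (B \ B') := by
    have hd : (0:ℝ) < ‖C - C'‖ := by
      rw [norm_pos_iff, sub_ne_zero]
      exact fun h => hCC h.symm
    set d := ‖C - C'‖ with hdd
    set ε := min d R₂ / 2 with hε
    have hε0 : 0 < ε := by positivity
    have hεd : ε < d := by
      rw [hε]
      have : min d R₂ ≤ d := min_le_left _ _
      linarith
    have hεR : ε < R₂ := by
      rw [hε]
      have : min d R₂ ≤ R₂ := min_le_right _ _
      linarith
    set u : EuclideanSpace ℝ (Fin m) := d⁻¹ • (C - C') with hu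
    have hdu : d • u = C - C' := by
      rw [hu, smul_smul, mul_inv_cancel₀ hd.ne', one_smul]
    have hnu : ‖u‖ = 1 := by
      rw [hu, norm_smul, norm_inv, Real.norm_eq_abs, abs_of_pos hd, ← hdd,
        inv_mul_cancel₀ hd.ne']
    set x₀ : EuclideanSpace ℝ (Fin m) := C + (R₂ - ε) • u with hx₀
    have hx₀B : x₀ ∈ B := by
      rw [hB, mem_ball, dist_eq_norm, hx₀, add_sub_cancel_left, norm_smul, hnu, mul_one,
        Real.norm_eq_abs, abs_of_pos (by linarith)]
      linarith
    have hx₀B' : x₀ ∉ closedBall C' R₂ := by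
      rw [mem_closedBall, dist_eq_norm, not_le, hx₀]
      have : C + (R₂ - ε) • u - C' = (d + (R₂ - ε)) • u := by
        rw [add_smul, hdu]; abel
      rw [this, norm_smul, hnu, mul_one, Real.norm_eq_abs, abs_of_pos (by linarith)]
      linarith
    have hsub2 : B \ closedBall C' R₂ ⊆ B \ B' :=
      diff_subset_diff_right ball_subset_closedBall
    refine lt_of_lt_of_le ?_ (measure_mono hsub2)
    refine (isOpen_ball.sdiff isClosed_closedBall).measure_pos volume ⟨x₀, hx₀B, hx₀B'⟩
  -- main strict inequality on the symmetric-difference pieces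
  have hfinBB' : volume (B \ B') ≠ ⊤ :=
    (lt_of_le_of_lt (measure_mono diff_subset) measure_ball_lt_top).ne
  have hfinB'B : volume (B' \ B) ≠ ⊤ :=
    (lt_of_le_of_lt (measure_mono diff_subset) measure_ball_lt_top).ne
  have hconst1 : IntegrableOn (fun _ => (R₂:ℝ) ^ α) (B' \ B) volume :=
    integrableOn_const hfinB'B
  have hconst2 : IntegrableOn (fun _ => (R₂:ℝ) ^ α) (B \ B') volume :=
    integrableOn_const hfinBB'
  have hstep1 : (∫ x in B' \ B, f x) ≤ (volume (B' \ B)).toReal * R₂ ^ α := by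
    have := setIntegral_mono_on hIB'B hconst1 (hmB'.diff hmB)
      (fun x hx => myzpow_anti hR₂ (hdistB x hx.2) hαneg.le)
    rwa [setIntegral_const, smul_eq_mul] at this
  have hstep2 : (volume (B \ B')).toReal * R₂ ^ α < ∫ x in B \ B', f x := by
    set g : EuclideanSpace ℝ (Fin m) → ℝ := fun x => f x - R₂ ^ α with hg
    have hgpos : ∀ x ∈ B \ B', 0 < g x := by
      intro x hx
      have h1 : R₁ < ‖x - C‖ := hdistK x fun h => hx.2 (hsub h)
      have h2 : ‖x - C‖ < R₂ := hdistB2 x hx.1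
      have := myzpow_anti_strict (hR₁.trans h1) h2 hαneg
      rw [hg]; dsimp only; rw [hf]; dsimp only
      linarith
    have hgint : IntegrableOn g (B \ B') volume := hIBB'.sub hconst2
    have h0 : 0 < ∫ x in B \ B', g x := by
      have hae : 0 ≤ᵐ[volume.restrict (B \ B')] g := by
        filter_upwards [ae_restrict_mem (hmB.diff hmB')] with x hx
        exact (hgpos x hx).le
      rw [setIntegral_pos_iff_support_of_nonneg_ae hae hgint]
      have hss : B \ B' ⊆ Function.support g ∩ (B \ B') :=
        fun x hx => ⟨(hgpos x hx).ne', hx⟩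
      exact lt_of_lt_of_le hpos (measure_mono hss)
    have hsubint : (∫ x in B \ B', g x) = (∫ x in B \ B', f x) -
        (volume (B \ B')).toReal * R₂ ^ α := by
      rw [hg]
      rw [integral_sub hIBB' hconst2, setIntegral_const, smul_eq_mul, measureReal_def]
    rw [hsubint] at h0
    linarith
  have hcore : (∫ x in B' \ B, f x) < ∫ x in B \ B', f x := by
    calc (∫ x in B' \ B, f x) ≤ (volume (B' \ B)).toReal * R₂ ^ α := hstep1
      _ = (volume (B \ B')).toReal * R₂ ^ α := by rw [hμeq]
      _ < ∫ x in B \ B', f x := hstep2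
  have hmain : (∫ x in B' \ K, f x) < ∫ x in B \ K, f x := by
    rw [hD', hD, setIntegral_union hdisj1 (hmB'.diff hmB) hIint hIB'B,
      setIntegral_union hdisj2 (hmB.diff hmB') hIint hIBB']
    exact add_lt_add_right hcore _
  exact ⟨hmain.le, iff_of_false hmain.ne hCC⟩
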